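/- Let [Γ] be a projective class of torsion-free affine connections on an oriented n-manifold M that contains the Levi-Civita connection of a pseudo-Riemannian metric g. Then the weighted tensor K_{ij} := g_{ij} ⊗ (Vol_g)^{−4/(n+1)}, a symmetric (0,2)-tensor of projective weight −4, satisfies the projective Killing equation K_{ij,k} + K_{jk,i} + K_{ki,j} = 0 (with covariant derivative taken with respect to any connection in [Γ]). -/

import Mathlib

open scoped ContDiff

noncomputable section

namespace ProjGeo

/-- The partial derivative of a function on `ℝⁿ` in the `j`-th coordinate direction. -/
def pd {n : ℕ} (j : Fin n) (f : (Fin n → ℝ) → ℝ) (p : Fin n → ℝ) : ℝ :=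
  fderiv ℝ f p (Pi.single j 1)

/-- Christoffel symbols in coordinates: `Γ p i j k` represents `Γ^i_{jk}` at the point `p`. -/
abbrev Christoffel (n : ℕ) := (Fin n → ℝ) → Fin n → Fin n → Fin n → ℝ

/-- A connection is torsion-free (symmetric) if `Γ^i_{jk} = Γ^i_{kj}`. -/
def TorsionFree {n : ℕ} (Γ : Christoffel n) : Prop :=
  ∀ p i j k, Γ p i j k = Γ p i k j

/-- Smoothness of the Christoffel symbols on the open set `U`. -/
def SmoothChristoffelOn {n : ℕ} (U : Set (Fin n → ℝ)) (Γ : Christoffel n) : Prop :=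
  ∀ i j k, ContDiffOn ℝ ∞ (fun p => Γ p i j k) U

/-- `γ` is a (parameterized) geodesic of the connection `Γ` on the parameter set `I`,
staying inside `U`: it is smooth and satisfies `γ̈^i + Γ^i_{jk} γ̇^j γ̇^k = 0`. -/
def IsGeodesicOn {n : ℕ} (U : Set (Fin n → ℝ)) (Γ : Christoffel n)
    (γ : ℝ → Fin n → ℝ) (I : Set ℝ) : Prop :=
  (∀ t ∈ I, γ t ∈ U) ∧ (∀ i, ContDiffOn ℝ ∞ (fun t => γ t i) I) ∧
  ∀ t ∈ I, ∀ i,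
    deriv (fun s => deriv (fun u => γ u i) s) t
      + ∑ j, ∑ k, Γ (γ t) i j k * deriv (fun u => γ u j) t * deriv (fun u => γ u k) t = 0

/-- `h` is a smooth regular reparameterisation defined on `J` and mapping `J` bijectively
onto `I`. -/
def IsReparam (I J : Set ℝ) (h : ℝ → ℝ) : Prop :=
  ContDiffOn ℝ ∞ h J ∧ (∀ t ∈ J, deriv h t ≠ 0) ∧ Set.BijOn h J I

/-- Two connections are projectively equivalent on `U`: each geodesic of the one is, after a
suitable reparameterisation, a geodesic of the other, and vice versa. -/
def ProjEquivOn {n : ℕ} (U : Set (Fin n → ℝ)) (Γ Γ' : Christoffel n) : Prop :=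
  (∀ γ I, IsOpen I → IsGeodesicOn U Γ γ I →
    ∃ h J, IsOpen J ∧ IsReparam I J h ∧ IsGeodesicOn U Γ' (fun t => γ (h t)) J) ∧
  (∀ γ I, IsOpen I → IsGeodesicOn U Γ' γ I →
    ∃ h J, IsOpen J ∧ IsReparam I J h ∧ IsGeodesicOn U Γ (fun t => γ (h t)) J)

/-- `Γ'` is obtained from `Γ` by the projective change associated with the 1-form `φ`:
`Γ'^i_{jk} = Γ^i_{jk} + φ_k δ^i_j + φ_j δ^i_k` on `U`. -/
def ProjChange {n : ℕ} (Γ Γ' : Christoffel n) (φ : (Fin n → ℝ) → Fin n → ℝ)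
    (U : Set (Fin n → ℝ)) : Prop :=
  ∀ p ∈ U, ∀ i j k, Γ' p i j k =
    Γ p i j k + (if i = j then φ p k else 0) + (if i = k then φ p j else 0)

end ProjGeo

namespace ProjGeo

/-- The covariant derivative `K_{ij,k}` of a `(0,2)`-tensor `K` of projective weight `w`
(in the local trivialization of `(Λₙ)^{w/(n+1)}` by `(dx¹∧⋯∧dxⁿ)^{w/(n+1)}`):
`K_{ij,k} = ∂_k K_{ij} − Γ^s_{ik} K_{sj} − Γ^s_{jk} K_{is} − (w/(n+1)) Γ^s_{sk} K_{ij}`. -/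
def covForm2 {n : ℕ} (w : ℝ) (Γ : Christoffel n) (K : (Fin n → ℝ) → Fin n → Fin n → ℝ)
    (p : Fin n → ℝ) (i j k : Fin n) : ℝ :=
  pd k (fun q => K q i j) p - ∑ s, Γ p s i k * K p s j - ∑ s, Γ p s j k * K p i s
    - (w / ((n : ℝ) + 1)) * (∑ s, Γ p s s k) * K p i j

end ProjGeo

namespace ProjGeo

/-- A (pseudo-Riemannian) metric on `U` in coordinates: a smooth symmetric nondegenerate
matrix-valued function. -/
def MetricOn {n : ℕ} (U : Set (Fin n → ℝ))
    (g : (Fin n → ℝ) → Matrix (Fin n) (Fin n) ℝ) : Prop :=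
  (∀ i j, ContDiffOn ℝ ∞ (fun p => g p i j) U) ∧
  (∀ p ∈ U, ∀ i j, g p i j = g p j i) ∧
  (∀ p ∈ U, (g p).det ≠ 0)

/-- A Riemannian (positive definite) metric on `U` in coordinates. -/
def RiemannianOn {n : ℕ} (U : Set (Fin n → ℝ))
    (g : (Fin n → ℝ) → Matrix (Fin n) (Fin n) ℝ) : Prop :=
  MetricOn U g ∧
  ∀ p ∈ U, ∀ v : Fin n → ℝ, v ≠ 0 → 0 < ∑ i, ∑ j, g p i j * v i * v j

/-- The Christoffel symbols of the Levi-Civita connection of the metric `g`: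
`Γ^i_{jk} = ½ g^{is} (∂_j g_{sk} + ∂_k g_{sj} − ∂_s g_{jk})`. -/
def LeviCivita {n : ℕ} (g : (Fin n → ℝ) → Matrix (Fin n) (Fin n) ℝ) : Christoffel n :=
  fun p i j k => (1 / 2) * ∑ s, (g p)⁻¹ i s *
    (pd j (fun q => g q s k) p + pd k (fun q => g q s j) p - pd s (fun q => g q j k) p)

end ProjGeo

namespace ProjGeo

/-- Jacobi's formula: derivative of the determinant of a matrix-valued function. -/
private lemma det_hasFDerivAt {n : ℕ} {M : (Fin n → ℝ) → Matrix (Fin n) (Fin n) ℝ}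
    {L : Fin n → Fin n → ((Fin n → ℝ) →L[ℝ] ℝ)} {p : Fin n → ℝ}
    (h : ∀ a b, HasFDerivAt (fun q => M q a b) (L a b) p) :
    HasFDerivAt (fun q => (M q).det)
      (∑ a, ∑ b, (M p).adjugate a b • L b a) p := by
  have h1 : ∀ σ : Equiv.Perm (Fin n),
      HasFDerivAt (fun q => ((Equiv.Perm.sign σ : ℤ) : ℝ) * ∏ i, M q (σ i) i)
        (((Equiv.Perm.sign σ : ℤ) : ℝ) •
          ∑ i, (∏ j ∈ Finset.univ.erase i, M p (σ j) j) • L (σ i) i) p := by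
    intro σ
    exact (HasFDerivAt.finset_prod fun i _ => h (σ i) i).const_mul _
  have h2 := HasFDerivAt.fun_sum (u := Finset.univ) fun σ (_ : σ ∈ Finset.univ) => h1 σ
  have hfun : (fun q => (M q).det)
      = fun q => ∑ σ : Equiv.Perm (Fin n), ((Equiv.Perm.sign σ : ℤ) : ℝ) * ∏ i, M q (σ i) i := by
    funext q; rw [Matrix.det_apply']
  rw [hfun]
  refine h2.congr_fderiv (Eq.symm ?_)
  refine ContinuousLinearMap.ext fun v => ?_
  simp only [ContinuousLinearMap.coe_sum', Finset.sum_apply, ContinuousLinearMap.coe_smul',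
    Pi.smul_apply, smul_eq_mul]
  have key : ∀ (i : Fin n) (b : Fin n → ℝ),
      ((M p).updateCol i b).det
        = ∑ σ : Equiv.Perm (Fin n), ((Equiv.Perm.sign σ : ℤ) : ℝ)
            * (b (σ i) * ∏ j ∈ Finset.univ.erase i, M p (σ j) j) := by
    intro i b
    rw [Matrix.det_apply']
    refine Finset.sum_congr rfl fun σ _ => ?_
    congr 1
    rw [← Finset.mul_prod_erase Finset.univ _ (Finset.mem_univ i)]
    congr 1
    · simp
    · exact Finset.prod_congr rfl fun j hj => by
        rw [Matrix.updateCol_apply, if_neg (Finset.ne_of_mem_erase hj)]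
  calc ∑ a, ∑ b, (M p).adjugate a b * (L b a) v
      = ∑ i, ((M p).updateCol i fun s => (L s i) v).det := by
        refine Finset.sum_congr rfl fun a _ => ?_
        rw [← Matrix.cramer_apply, Matrix.cramer_eq_adjugate_mulVec]
        simp [Matrix.mulVec, dotProduct]
    _ = ∑ i, ∑ σ : Equiv.Perm (Fin n), ((Equiv.Perm.sign σ : ℤ) : ℝ)
          * ((L (σ i) i) v * ∏ j ∈ Finset.univ.erase i, M p (σ j) j) :=
        Finset.sum_congr rfl fun i _ => key i _
    _ = ∑ σ : Equiv.Perm (Fin n), ((Equiv.Perm.sign σ : ℤ) : ℝ)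
          * ∑ i, (∏ j ∈ Finset.univ.erase i, M p (σ j) j) * (L (σ i) i) v := by
        rw [Finset.sum_comm]
        refine Finset.sum_congr rfl fun σ _ => ?_
        rw [Finset.mul_sum]
        exact Finset.sum_congr rfl fun i _ => by ring

/-- If the projective class `[Γ]` contains the Levi-Civita connection of a
pseudo-Riemannian metric `g`, then the weighted `(0,2)`-tensor
`K_{ij} := g_{ij} ⊗ (Vol_g)^{−4/(n+1)}` of projective weight `−4` (whose coefficient in the
local trivialization is `g_{ij} |det g|^{−2/(n+1)}`) satisfies the projective Killing
equation `K_{ij,k} + K_{jk,i} + K_{ki,j} = 0`, the covariant derivative being taken with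
respect to any connection `Γ'` in the projective class `[Γ]`. -/
theorem statement_10 {n : ℕ} (hn : 2 ≤ n) (U : Set (Fin n → ℝ)) (hU : IsOpen U)
    (g : (Fin n → ℝ) → Matrix (Fin n) (Fin n) ℝ) (hg : MetricOn U g)
    (Γ' : Christoffel n) (hTF' : TorsionFree Γ')
    (φ : (Fin n → ℝ) → Fin n → ℝ) (hmem : ProjChange (LeviCivita g) Γ' φ U)
    (K : (Fin n → ℝ) → Fin n → Fin n → ℝ)
    (hK : ∀ p i j, K p i j = g p i j * |(g p).det| ^ (-2 / ((n : ℝ) + 1))) :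
    ∀ p ∈ U, ∀ i j k,
      covForm2 (-4) Γ' K p i j k + covForm2 (-4) Γ' K p j k i
        + covForm2 (-4) Γ' K p k i j = 0 := by
  intro p hp i j k
  classical
  obtain ⟨hg_smooth, hg_symm, hg_det⟩ := hg
  have hn1 : ((n : ℝ) + 1) ≠ 0 := by positivity
  have hdet0 : (g p).det ≠ 0 := hg_det p hp
  have hdetU : IsUnit (g p).det := isUnit_iff_ne_zero.mpr hdet0
  have hA_symm : ∀ a b, g p a b = g p b a := hg_symm p hp
  set c : ℝ := -2 / ((n : ℝ) + 1) with hc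
  set Fp : ℝ := |(g p).det| ^ c with hFp
  set L : Fin n → Fin n → ((Fin n → ℝ) →L[ℝ] ℝ) :=
    fun a b => fderiv ℝ (fun q => g q a b) p with hLdef
  set dg : Fin n → Fin n → Fin n → ℝ := fun d a b => L a b (Pi.single d 1) with hdgdef
  have hL : ∀ a b, HasFDerivAt (fun q => g q a b) (L a b) p := fun a b =>
    (((hg_smooth a b).contDiffAt (hU.mem_nhds hp)).differentiableAt (by simp)).hasFDerivAt
  have hdg_symm : ∀ d a b, dg d a b = dg d b a := by
    intro d a b
    have hev : (fun q => g q a b) =ᶠ[nhds p] fun q => g q b a :=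
      Filter.eventuallyEq_of_mem (hU.mem_nhds hp) fun q hq => hg_symm q hq a b
    simp only [hdgdef, hLdef, hev.fderiv_eq]
  have hAinv_symm : ∀ a b, (g p)⁻¹ a b = (g p)⁻¹ b a := by
    intro a b
    have hT : (g p).transpose = g p := by ext a b; exact hA_symm b a
    calc (g p)⁻¹ a b = ((g p).transpose)⁻¹ a b := by rw [hT]
      _ = ((g p)⁻¹).transpose a b := by rw [← Matrix.transpose_nonsing_inv]
      _ = (g p)⁻¹ b a := rfl
  have hmulinv : g p * (g p)⁻¹ = 1 := Matrix.mul_nonsing_inv _ hdetU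
  have hdelta : ∀ (w : Fin n → ℝ) (b : Fin n),
      ∑ s, (∑ t, (g p)⁻¹ s t * w t) * g p s b = w b := by
    intro w b
    calc ∑ s, (∑ t, (g p)⁻¹ s t * w t) * g p s b
        = ∑ s, ∑ t, w t * (g p b s * (g p)⁻¹ s t) := by
          refine Finset.sum_congr rfl fun s _ => ?_
          rw [Finset.sum_mul]
          exact Finset.sum_congr rfl fun t _ => by rw [hA_symm s b]; ring
      _ = ∑ t, ∑ s, w t * (g p b s * (g p)⁻¹ s t) := Finset.sum_comm
      _ = ∑ t, w t * (g p * (g p)⁻¹) b t := by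
          refine Finset.sum_congr rfl fun t _ => ?_
          rw [Matrix.mul_apply, Finset.mul_sum]
      _ = w b := by rw [hmulinv]; simp [Matrix.one_apply]
  have hLC : ∀ a b d, LeviCivita g p a b d
      = (1/2) * ∑ t, (g p)⁻¹ a t * (dg b t d + dg d t b - dg t b d) := fun a b d => rfl
  have hGam1 : ∀ a b d, ∑ s, LeviCivita g p s a d * g p s b
      = (1/2) * (dg a b d + dg d b a - dg b a d) := by
    intro a b d
    calc ∑ s, LeviCivita g p s a d * g p s b
        = (1/2) * ∑ s, (∑ t, (g p)⁻¹ s t * (dg a t d + dg d t a - dg t a d)) * g p s b := by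
          rw [Finset.mul_sum]
          exact Finset.sum_congr rfl fun s _ => by rw [hLC]; ring
      _ = (1/2) * (dg a b d + dg d b a - dg b a d) := by rw [hdelta]
  have htr : ∀ d, ∑ s, LeviCivita g p s s d
      = (1/2) * ∑ x, ∑ y, (g p)⁻¹ x y * dg d y x := by
    intro d
    have expand : ∀ s t : Fin n,
        (1/2 : ℝ) * ((g p)⁻¹ s t * (dg s t d + dg d t s - dg t s d))
          = (1/2) * ((g p)⁻¹ s t * dg s t d) + (1/2) * ((g p)⁻¹ s t * dg d t s)
            - (1/2) * ((g p)⁻¹ s t * dg t s d) := fun s t => by ring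
    have e1 : ∑ s : Fin n, ∑ t, (g p)⁻¹ s t * dg t s d
        = ∑ s : Fin n, ∑ t, (g p)⁻¹ s t * dg s t d := by
      rw [Finset.sum_comm]
      exact Finset.sum_congr rfl fun a _ => Finset.sum_congr rfl fun b _ => by
        rw [hAinv_symm]
    calc ∑ s, LeviCivita g p s s d
        = ∑ s, ∑ t, (1/2 : ℝ) * ((g p)⁻¹ s t * (dg s t d + dg d t s - dg t s d)) := by
          refine Finset.sum_congr rfl fun s _ => ?_
          rw [hLC, Finset.mul_sum]
      _ = (1/2) * (∑ s : Fin n, ∑ t, (g p)⁻¹ s t * dg s t d)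
            + (1/2) * (∑ s : Fin n, ∑ t, (g p)⁻¹ s t * dg d t s)
            - (1/2) * (∑ s : Fin n, ∑ t, (g p)⁻¹ s t * dg t s d) := by
          simp only [expand, Finset.sum_add_distrib, Finset.sum_sub_distrib, ← Finset.mul_sum]
      _ = (1/2) * ∑ x, ∑ y, (g p)⁻¹ x y * dg d y x := by rw [e1]; ring
  -- the adjugate in terms of the inverse
  have hadj : ∀ a b, (g p).adjugate a b = (g p).det * (g p)⁻¹ a b := by
    intro a b
    have h2 : (g p)⁻¹ a b = ((g p).det)⁻¹ * (g p).adjugate a b := by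
      rw [Matrix.inv_def, Ring.inverse_eq_inv']
      simp [Matrix.smul_apply]
    rw [h2]
    field_simp
  -- Jacobi's formula at p
  have hdetF : HasFDerivAt (fun q => (g q).det)
      (∑ a, ∑ b, (g p).adjugate a b • L b a) p := det_hasFDerivAt hL
  have hFapp : ∀ d : Fin n, (∑ a, ∑ b, (g p).adjugate a b • L b a) (Pi.single d 1)
      = (g p).det * ∑ x, ∑ y, (g p)⁻¹ x y * dg d y x := by
    intro d
    simp only [ContinuousLinearMap.coe_sum', Finset.sum_apply, ContinuousLinearMap.coe_smul',
      Pi.smul_apply, smul_eq_mul, Finset.mul_sum]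
    refine Finset.sum_congr rfl fun a _ => Finset.sum_congr rfl fun b _ => ?_
    rw [hadj]
    simp only [hdgdef]
    ring
  -- derivative of |x| ^ c at det
  have habs : HasDerivAt (fun x : ℝ => |x| ^ c) (c * Fp / (g p).det) (g p).det := by
    have h0 : |(g p).det| ≠ 0 := abs_ne_zero.mpr hdet0
    have h0' : (0:ℝ) < |(g p).det| := abs_pos.mpr hdet0
    have h1 : HasDerivAt (fun x : ℝ => x ^ c) (c * |(g p).det| ^ (c - 1)) |(g p).det| :=
      Real.hasDerivAt_rpow_const (Or.inl h0)
    rcases lt_or_gt_of_ne hdet0 with hd | hd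
    · have h3 := h1.comp (g p).det (hasDerivAt_abs_neg hd)
      have : c * |(g p).det| ^ (c - 1) * (-1) = c * Fp / (g p).det := by
        rw [Real.rpow_sub h0', Real.rpow_one, hFp, abs_of_neg hd]
        field_simp
      rw [← this]
      exact h3
    · have h3 := h1.comp (g p).det (hasDerivAt_abs_pos hd)
      have : c * |(g p).det| ^ (c - 1) * 1 = c * Fp / (g p).det := by
        rw [Real.rpow_sub h0', Real.rpow_one, hFp, abs_of_pos hd]
        field_simp
      rw [← this]
      exact h3
  have hFder : HasFDerivAt (fun q => |(g q).det| ^ c)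
      ((c * Fp / (g p).det) • (∑ a, ∑ b, (g p).adjugate a b • L b a)) p :=
    by have := habs.comp_hasFDerivAt p hdetF; exact this
  have hpdK : ∀ d a b, pd d (fun q => K q a b) p
      = g p a b * (c * Fp * ∑ x, ∑ y, (g p)⁻¹ x y * dg d y x) + Fp * dg d a b := by
    intro d a b
    have hKfun : (fun q => K q a b) = fun q => g q a b * |(g q).det| ^ c := by
      funext q; rw [hK]
    have hmul : HasFDerivAt (fun q => g q a b * |(g q).det| ^ c)
        (g p a b • (c * Fp / (g p).det) • (∑ a, ∑ b, (g p).adjugate a b • L b a)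
          + |(g p).det| ^ c • L a b) p := (hL a b).mul hFder
    rw [pd, hKfun, hmul.fderiv]
    simp only [ContinuousLinearMap.add_apply, ContinuousLinearMap.coe_smul', Pi.smul_apply,
      smul_eq_mul]
    rw [hFapp d]
    have : (L a b) (Pi.single d 1) = dg d a b := rfl
    rw [this, ← hFp]
    field_simp
  -- the three Christoffel sums for Γ'
  have hmemp := hmem p hp
  have hKp : ∀ a b, K p a b = g p a b * Fp := by
    intro a b; rw [hK, ← hFp]
  have hΓ'1 : ∀ a b d, ∑ s, Γ' p s a d * K p s b
      = ((1/2) * (dg a b d + dg d b a - dg b a d) + φ p d * g p a b + φ p a * g p d b) * Fp := by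
    intro a b d
    have step : ∀ s, Γ' p s a d * K p s b
        = LeviCivita g p s a d * g p s b * Fp
          + (if s = a then φ p d * g p s b * Fp else 0)
          + (if s = d then φ p a * g p s b * Fp else 0) := by
      intro s
      rw [hmemp s a d, hKp]
      split_ifs <;> ring
    simp only [step]
    rw [Finset.sum_add_distrib, Finset.sum_add_distrib, Finset.sum_ite_eq' Finset.univ,
      Finset.sum_ite_eq' Finset.univ, ← Finset.sum_mul, hGam1]
    simp only [Finset.mem_univ, if_true]
    ring
  have hΓ'2 : ∀ a b d, ∑ s, Γ' p s b d * K p a s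
      = ((1/2) * (dg b a d + dg d a b - dg a b d) + φ p d * g p a b + φ p b * g p d a) * Fp := by
    intro a b d
    calc ∑ s, Γ' p s b d * K p a s = ∑ s, Γ' p s b d * K p s a := by
          refine Finset.sum_congr rfl fun s _ => ?_
          rw [hKp, hKp, hA_symm a s]
      _ = ((1/2) * (dg b a d + dg d a b - dg a b d) + φ p d * g p b a + φ p b * g p d a) * Fp :=
          hΓ'1 b a d
      _ = ((1/2) * (dg b a d + dg d a b - dg a b d) + φ p d * g p a b + φ p b * g p d a) * Fp := by
          rw [hA_symm b a]
  have hΓ'tr : ∀ d, ∑ s, Γ' p s s d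
      = (1/2) * (∑ x, ∑ y, (g p)⁻¹ x y * dg d y x) + ((n:ℝ)+1) * φ p d := by
    intro d
    have step : ∀ s, Γ' p s s d
        = LeviCivita g p s s d + φ p d + (if s = d then φ p s else 0) := by
      intro s; rw [hmemp s s d]; simp
    simp only [step]
    rw [Finset.sum_add_distrib, Finset.sum_add_distrib, htr, Finset.sum_const,
      Finset.sum_ite_eq' Finset.univ]
    simp only [Finset.mem_univ, if_true, Finset.card_univ, Fintype.card_fin, nsmul_eq_mul]
    ring
  have hcov : ∀ a b d, covForm2 (-4) Γ' K p a b d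
      = (2 * φ p d * g p a b - φ p a * g p d b - φ p b * g p d a) * Fp := by
    intro a b d
    rw [covForm2, hpdK d a b, hΓ'1 a b d, hΓ'2 a b d, hΓ'tr d, hKp a b, hdg_symm d a b, hc]
    field_simp
    ring
  rw [hcov i j k, hcov j k i, hcov k i j, hA_symm k j, hA_symm k i, hA_symm j i]
  ring

end ProjGeo
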